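/- (Parametric system, entanglement bound is tight.) Fix N ≥ 0 and 0 ≤ χ < 1/2, set M = [[0,σz],[σz,0]], A = −(1/2)𝟙₄ + χM, D = (1+2N)𝟙₄, and let r ≥ 0 be defined by e^{2r} = (1+2N)/(1−2χ). The pure two-mode squeezed covariance matrix σ = [[c𝟙₂, s σz],[s σz, c𝟙₂]] with c = cosh(2r) and s = sinh(2r) satisfies σ + iΩ ≥ 0 with det σ = 1, satisfies the stabilising Lyapunov inequality Aσ + σAᵀ + D ≥ 0, and has smallest partially transposed symplectic eigenvalue ν̃₋ = e^{−2r} = (1−2χ)/(1+2N) for the 1 vs 1 bipartition; hence its logarithmic negativity equals log₂(1+2N) − log₂(1−2χ), saturating the bound. -/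

import Mathlib

open Matrix
open scoped ComplexOrder

open Classical in
/-- The eigenvalues of a matrix in increasing order (junk value `0` if not Hermitian). -/
noncomputable def eigUp {d : ℕ} (M : Matrix (Fin d) (Fin d) ℝ) : Fin d → ℝ :=
  if h : M.IsHermitian then h.eigenvalues ∘ Tuple.sort h.eigenvalues else 0

/-- The eigenvalues of a matrix in decreasing order. -/
noncomputable def eigDown {d : ℕ} (M : Matrix (Fin d) (Fin d) ℝ) (j : Fin d) : ℝ :=
  eigUp M j.rev

/-- The standard symplectic form on `2n` canonical variables: block diagonal with
blocks `[[0,1],[-1,0]]`. -/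
def Omega (n : ℕ) : Matrix (Fin (2*n)) (Fin (2*n)) ℝ :=
  Matrix.of fun i j =>
    if (i : ℕ) + 1 = (j : ℕ) ∧ (i : ℕ) % 2 = 0 then 1
    else if (j : ℕ) + 1 = (i : ℕ) ∧ (j : ℕ) % 2 = 0 then -1 else 0

/-- Partial transposition matrix `T = 𝟙₂^{⊕ l} ⊕ σz^{⊕ (n-l)}` for the bipartition of the
first `l` versus the last `n - l` modes. -/
def Tmat (n l : ℕ) : Matrix (Fin (2*n)) (Fin (2*n)) ℝ :=
  Matrix.diagonal fun i => if (i : ℕ) / 2 < l ∨ (i : ℕ) % 2 = 0 then 1 else -1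

/-- The partially transposed symplectic form `Ω̃ = T Ω T`. -/
def OmegaPT (n l : ℕ) : Matrix (Fin (2*n)) (Fin (2*n)) ℝ :=
  Tmat n l * Omega n * Tmat n l

open Classical in
/-- The positive square root of a positive semidefinite matrix (junk value `0` otherwise). -/
noncomputable def msqrt {d : ℕ} (M : Matrix (Fin d) (Fin d) ℝ) : Matrix (Fin d) (Fin d) ℝ :=
  if h : M.PosSemidef then
    (h.1.eigenvectorUnitary : Matrix (Fin d) (Fin d) ℝ) *
      diagonal ((↑) ∘ Real.sqrt ∘ h.1.eigenvalues) *
      (star h.1.eigenvectorUnitary : Matrix (Fin d) (Fin d) ℝ)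
  else 0

/-- `σ + iΩ ≥ 0`: the Robertson–Schrödinger condition for a real symmetric matrix `σ`
to be a bona fide covariance matrix. -/
def IsCM (n : ℕ) (σ : Matrix (Fin (2*n)) (Fin (2*n)) ℝ) : Prop :=
  σ.IsSymm ∧
    (σ.map (Complex.ofReal ·) + Complex.I • (Omega n).map (Complex.ofReal ·)).PosSemidef

/-- `ν̃₋²`, the square of the smallest partially transposed symplectic eigenvalue of `σ`, for
the bipartition of the first `l` versus the remaining modes: the smallest eigenvalue of
`σ^{1/2} Ω̃ᵀ σ Ω̃ σ^{1/2}`. -/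
noncomputable def nuSq (n l : ℕ) (σ : Matrix (Fin (2*n)) (Fin (2*n)) ℝ) : ℝ :=
  sInf (spectrum ℝ (msqrt σ * (OmegaPT n l)ᵀ * σ * OmegaPT n l * msqrt σ))

/-- `ν̃₋`, the smallest partially transposed symplectic eigenvalue of `σ`. -/
noncomputable def nuMin (n l : ℕ) (σ : Matrix (Fin (2*n)) (Fin (2*n)) ℝ) : ℝ :=
  Real.sqrt (nuSq n l σ)

/-- The logarithmic negativity `E_N(σ) = max (0, −log₂ ν̃₋)`. -/
noncomputable def logNeg (n l : ℕ) (σ : Matrix (Fin (2*n)) (Fin (2*n)) ℝ) : ℝ :=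
  max 0 (-(Real.logb 2 (nuMin n l σ)))


lemma omega_eq : Omega 2 = !![0,1,0,0; -1,0,0,0; 0,0,0,1; 0,0,-1,0] := by
  ext i j
  fin_cases i <;> fin_cases j <;> simp [Omega] <;> first | rfl | decide | simp [Matrix.vecHead, Matrix.vecTail]

lemma tmat_eq : Tmat 2 1 = !![1,0,0,0; 0,1,0,0; 0,0,1,0; 0,0,0,-1] := by
  ext i j
  fin_cases i <;> fin_cases j <;> simp [Tmat, Matrix.diagonal] <;> first | rfl | decide | simp [Matrix.vecHead, Matrix.vecTail]

lemma omegaPT_eq : OmegaPT 2 1 = !![0,1,0,0; -1,0,0,0; 0,0,0,-1; 0,0,1,0] := by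
  rw [OmegaPT, omega_eq, tmat_eq]
  ext i j
  fin_cases i <;> fin_cases j <;> simp [Matrix.mul_apply, Fin.sum_univ_four] <;> first | rfl | decide | simp [Matrix.vecHead, Matrix.vecTail]

lemma psd_struct (α β : ℝ) (h1 : 0 ≤ α - β) (h2 : 0 ≤ α + β) :
    (!![α,0,β,0; 0,α,0,-β; β,0,α,0; 0,-β,0,α] :
      Matrix (Fin (2*2)) (Fin (2*2)) ℝ).PosSemidef := by
  refine Matrix.PosSemidef.of_dotProduct_mulVec_nonneg ?_ ?_
  · ext i j
    fin_cases i <;> fin_cases j <;> simp [Matrix.conjTranspose_apply]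
  · intro x
    have e : star x ⬝ᵥ ((!![α,0,β,0; 0,α,0,-β; β,0,α,0; 0,-β,0,α] :
        Matrix (Fin (2*2)) (Fin (2*2)) ℝ) *ᵥ x) =
        (α+β)/2*((x 0 + x 2)^2 + (x 1 - x 3)^2)
          + (α-β)/2*((x 0 - x 2)^2 + (x 1 + x 3)^2) := by
      show ∑ i : Fin 4, _ = _
      simp [dotProduct, Matrix.mulVec, Fin.sum_univ_four]
      ring
    rw [e]
    positivity


lemma key_ineq (N χ : ℝ) (hN : 0 ≤ N) (hχ0 : 0 ≤ χ) (h2N : 0 < 1+2*N) :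
    ((1+2*χ)*(1-2*χ))/(1+2*N) ≤ 1+2*N := by
  rw [div_le_iff₀ h2N]; nlinarith [sq_nonneg χ, sq_nonneg N]


lemma detQaux (a b x : ℝ) :
    (!![x-a,0,-b,0; 0,x-a,0,b; -b,0,x-a,0; 0,b,0,x-a] : Matrix (Fin 4) (Fin 4) ℝ).det
      = ((x - (a - b)) * (x - (a + b)))^2 := by
  simp [Matrix.det_succ_row_zero, Fin.sum_univ_succ, Fin.succAbove, Matrix.cons_val_zero,
    Matrix.cons_val_one, Matrix.head_cons, Matrix.cons_val_two, Matrix.cons_val_three,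
    Matrix.vecHead, Matrix.vecTail]
  ring

lemma detSig (α β : ℝ) :
    (!![α,0,β,0; 0,α,0,-β; β,0,α,0; 0,-β,0,α] : Matrix (Fin 4) (Fin 4) ℝ).det
      = (α^2-β^2)^2 := by
  simp [Matrix.det_succ_row_zero, Fin.sum_univ_succ, Fin.succAbove, Matrix.cons_val_zero,
    Matrix.cons_val_one, Matrix.head_cons, Matrix.cons_val_two, Matrix.cons_val_three,
    Matrix.vecHead, Matrix.vecTail]
  ring

set_option maxHeartbeats 4000000 in
/-- **Parametric system, entanglement bound is tight.** With `A = −(1/2)𝟙₄ + χM`,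
`D = (1+2N)𝟙₄`, `0 ≤ χ < 1/2` and `e^{2r} = (1+2N)/(1−2χ)` (`r ≥ 0`), the pure two-mode
squeezed covariance matrix with `c = cosh 2r`, `s = sinh 2r` is a covariance matrix with
`det σ = 1` satisfying the stabilising Lyapunov inequality, and has
`ν̃₋ = e^{−2r} = (1−2χ)/(1+2N)` for the 1 vs 1 bipartition; hence
`E_N(σ) = log₂(1+2N) − log₂(1−2χ)`, saturating the bound. -/
theorem parametric_system_entanglement_bound_tight (N χ r : ℝ) (hN : 0 ≤ N)
    (hχ0 : 0 ≤ χ) (hχ : χ < 1/2) (hr0 : 0 ≤ r)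
    (hr : Real.exp (2*r) = (1 + 2*N)/(1 - 2*χ))
    (M A D σ : Matrix (Fin (2*2)) (Fin (2*2)) ℝ)
    (hM : M = !![0,0,1,0; 0,0,0,-1; 1,0,0,0; 0,-1,0,0])
    (hA : A = (-(1/2) : ℝ) • 1 + χ • M) (hD : D = (1 + 2*N) • 1)
    (hσ : σ = !![Real.cosh (2*r), 0, Real.sinh (2*r), 0;
                 0, Real.cosh (2*r), 0, -Real.sinh (2*r);
                 Real.sinh (2*r), 0, Real.cosh (2*r), 0;
                 0, -Real.sinh (2*r), 0, Real.cosh (2*r)]) :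
    IsCM 2 σ ∧ σ.det = 1 ∧ (A * σ + σ * Aᵀ + D).PosSemidef ∧
      nuMin 2 1 σ = Real.exp (-(2*r)) ∧ nuMin 2 1 σ = (1-2*χ)/(1+2*N) ∧
      logNeg 2 1 σ = Real.logb 2 (1+2*N) - Real.logb 2 (1-2*χ) := by
  
  subst hM hA hD
  have h2χ : (0:ℝ) < 1 - 2*χ := by linarith
  have h2N : (0:ℝ) < 1 + 2*N := by linarith
  set c : ℝ := Real.cosh (2*r) with hc
  set s : ℝ := Real.sinh (2*r) with hs
  set c1 : ℝ := Real.cosh r with hc1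
  set s1 : ℝ := Real.sinh r with hs1
  have hpy1 : c1^2 - s1^2 = 1 := Real.cosh_sq_sub_sinh_sq r
  have hpy : c^2 - s^2 = 1 := Real.cosh_sq_sub_sinh_sq (2*r)
  have hce : c + s = Real.exp (2*r) := Real.cosh_add_sinh (2*r)
  have hce' : c - s = Real.exp (-(2*r)) := Real.cosh_sub_sinh (2*r)
  have hc1e : c1 + s1 = Real.exp r := Real.cosh_add_sinh r
  have hc1e' : c1 - s1 = Real.exp (-r) := Real.cosh_sub_sinh r
  have hcc : c = c1^2 + s1^2 := Real.cosh_two_mul r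
  have hss : s = 2*(c1*s1) := by rw [hs, Real.sinh_two_mul, ← hc1, ← hs1]; ring
  have hex : Real.exp (-(2*r)) ≤ Real.exp (2*r) := Real.exp_le_exp.mpr (by linarith)
  have hex1 : Real.exp (-r) ≤ Real.exp r := Real.exp_le_exp.mpr (by linarith)
  have hsc : 0 ≤ c - s := hce' ▸ (Real.exp_pos _).le
  have hsc' : 0 ≤ c + s := hce ▸ (Real.exp_pos _).le
  have hsc1 : 0 ≤ c1 - s1 := hc1e' ▸ (Real.exp_pos _).le
  have hsc1' : 0 ≤ c1 + s1 := hc1e ▸ (Real.exp_pos _).le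
  have hs0 : 0 ≤ s := by linarith
  have hc0 : 0 ≤ c := by linarith
  have hs10 : 0 ≤ s1 := by linarith
  have hc10 : 0 ≤ c1 := by linarith
  -- the square root
  set S : Matrix (Fin (2*2)) (Fin (2*2)) ℝ :=
    !![c1,0,s1,0; 0,c1,0,-s1; s1,0,c1,0; 0,-s1,0,c1] with hS
  have hSpsd : S.PosSemidef := psd_struct c1 s1 hsc1 hsc1'
  have hσ2 : σ = !![c1^2+s1^2, 0, 2*(c1*s1), 0; 0, c1^2+s1^2, 0, -(2*(c1*s1));
      2*(c1*s1), 0, c1^2+s1^2, 0; 0, -(2*(c1*s1)), 0, c1^2+s1^2] := by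
    rw [hσ, hcc, hss]
  have hS2 : S * S = σ := by
    rw [hσ2, hS]
    ext i j
    fin_cases i <;> fin_cases j <;>
      simp [Matrix.mul_apply, Fin.sum_univ_four, Matrix.cons_val_zero, Matrix.cons_val_one, Matrix.head_cons, Matrix.cons_val_two, Matrix.cons_val_three, Matrix.vecHead, Matrix.vecTail] <;> try ring
  have hσpsd : σ.PosSemidef := by rw [hσ]; exact psd_struct c s hsc hsc'
  have hmsqrt : msqrt σ = S := by
    rw [msqrt, dif_pos hσpsd]
    open MatrixOrder in
    have h1 : CFC.sqrt σ = S := CFC.sqrt_unique hS2 hSpsd.nonneg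
    open MatrixOrder in
    rw [← h1, CFC.sqrt_eq_real_sqrt σ hσpsd.nonneg, cfcₙ_eq_cfc, hσpsd.1.cfc_eq]
    simp [Matrix.IsHermitian.cfc, Unitary.conjStarAlgAut_apply, Function.comp_def]
  -- the matrix inside the spectrum
  set qa : ℝ := c*c1^2 + 2*s*c1*s1 + c*s1^2 with hqa
  set qb : ℝ := 2*c*c1*s1 + s*s1^2 + s*c1^2 with hqb
  set Qm : Matrix (Fin (2*2)) (Fin (2*2)) ℝ :=
    !![qa,0,qb,0; 0,qa,0,-qb; qb,0,qa,0; 0,-qb,0,qa] with hQm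
  have hOPTt : (OmegaPT 2 1)ᵀ = !![0,-1,0,0; 1,0,0,0; 0,0,0,1; 0,0,-1,0] := by
    rw [omegaPT_eq]
    ext i j
    fin_cases i <;> fin_cases j <;> simp [Matrix.transpose_apply, Matrix.cons_val_zero, Matrix.cons_val_one, Matrix.head_cons, Matrix.cons_val_two, Matrix.cons_val_three, Matrix.vecHead, Matrix.vecTail]
  have hp1 : S * (OmegaPT 2 1)ᵀ = !![0,-c1,0,s1; c1,0,s1,0; 0,-s1,0,c1; -s1,0,-c1,0] := by
    rw [hOPTt, hS]
    ext i j
    fin_cases i <;> fin_cases j <;>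
      simp [Matrix.mul_apply, Fin.sum_univ_four, Matrix.cons_val_zero, Matrix.cons_val_one, Matrix.head_cons, Matrix.cons_val_two, Matrix.cons_val_three, Matrix.vecHead, Matrix.vecTail] <;> try ring
  have hp2 : S * (OmegaPT 2 1)ᵀ * σ = !![0, -(c*c1+s*s1), 0, s*c1+c*s1;
      c*c1+s*s1, 0, s*c1+c*s1, 0; 0, -(c*s1+s*c1), 0, s*s1+c*c1;
      -(c*s1+s*c1), 0, -(s*s1+c*c1), 0] := by
    rw [hp1, hσ]
    ext i j
    fin_cases i <;> fin_cases j <;>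
      simp [Matrix.mul_apply, Fin.sum_univ_four, Matrix.cons_val_zero, Matrix.cons_val_one, Matrix.head_cons, Matrix.cons_val_two, Matrix.cons_val_three, Matrix.vecHead, Matrix.vecTail] <;> try ring
  have hp3 : S * (OmegaPT 2 1)ᵀ * σ * OmegaPT 2 1 = !![c*c1+s*s1, 0, s*c1+c*s1, 0;
      0, c*c1+s*s1, 0, -(s*c1+c*s1); c*s1+s*c1, 0, s*s1+c*c1, 0;
      0, -(c*s1+s*c1), 0, s*s1+c*c1] := by
    rw [hp2, omegaPT_eq]
    ext i j
    fin_cases i <;> fin_cases j <;>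
      simp [Matrix.mul_apply, Fin.sum_univ_four, Matrix.cons_val_zero, Matrix.cons_val_one, Matrix.head_cons, Matrix.cons_val_two, Matrix.cons_val_three, Matrix.vecHead, Matrix.vecTail] <;> try ring
  have hQ : msqrt σ * (OmegaPT 2 1)ᵀ * σ * OmegaPT 2 1 * msqrt σ = Qm := by
    rw [hmsqrt, hp3, hQm, hS, hqa, hqb]
    ext i j
    fin_cases i <;> fin_cases j <;>
      simp [Matrix.mul_apply, Fin.sum_univ_four, Matrix.cons_val_zero, Matrix.cons_val_one, Matrix.head_cons, Matrix.cons_val_two, Matrix.cons_val_three, Matrix.vecHead, Matrix.vecTail] <;> try ring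
  have haux1 : qa - qb = Real.exp (-(2*r)) * Real.exp (-(2*r)) := by
    have h1 : qa - qb = (c - s) * (c1 - s1)^2 := by rw [hqa, hqb]; ring
    have h2 : Real.exp (-r) * Real.exp (-r) = Real.exp (-(2*r)) := by
      rw [← Real.exp_add]; congr 1; ring
    rw [h1, hce', hc1e', sq, h2]
  have haux2 : qa + qb = Real.exp (2*r) * Real.exp (2*r) := by
    have h1 : qa + qb = (c + s) * (c1 + s1)^2 := by rw [hqa, hqb]; ring
    have h2 : Real.exp r * Real.exp r = Real.exp (2*r) := by
      rw [← Real.exp_add]; congr 1; ring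
    rw [h1, hce, hc1e, sq, h2]
  have hdetfac : ∀ x : ℝ, (x • (1 : Matrix (Fin (2*2)) (Fin (2*2)) ℝ) - Qm).det
      = ((x - (qa - qb)) * (x - (qa + qb)))^2 := by
    intro x
    have hm : x • (1 : Matrix (Fin (2*2)) (Fin (2*2)) ℝ) - Qm
        = !![x-qa,0,-qb,0; 0,x-qa,0,qb; -qb,0,x-qa,0; 0,qb,0,x-qa] := by
      rw [hQm]
      ext i j
      fin_cases i <;> fin_cases j <;>
        simp [Matrix.one_apply, Matrix.smul_apply, Matrix.sub_apply, Matrix.cons_val_zero, Matrix.cons_val_one, Matrix.head_cons, Matrix.cons_val_two, Matrix.cons_val_three, Matrix.vecHead, Matrix.vecTail] <;> try ring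
    rw [hm]
    exact detQaux qa qb x
  have hspecQ : spectrum ℝ Qm = {qa - qb, qa + qb} := by
    ext x
    rw [spectrum.mem_iff, Algebra.algebraMap_eq_smul_one,
      Matrix.isUnit_iff_isUnit_det, isUnit_iff_ne_zero, not_ne_iff, hdetfac x]
    simp [pow_eq_zero_iff, mul_eq_zero, sub_eq_zero]
  have hqb0 : 0 ≤ qb := by
    rw [hqb]
    have := mul_nonneg (mul_nonneg hc0 hc10) hs10
    nlinarith [mul_nonneg hs0 (sq_nonneg s1), mul_nonneg hs0 (sq_nonneg c1)]
  have hnusq : nuSq 2 1 σ = Real.exp (-(2*r)) * Real.exp (-(2*r)) := by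
    rw [nuSq, hQ, hspecQ, csInf_pair, (show ∀ a b : ℝ, a ⊓ b = min a b from fun _ _ => rfl), min_eq_left (by linarith), haux1]
  have hnumin : nuMin 2 1 σ = Real.exp (-(2*r)) := by
    rw [nuMin, hnusq, Real.sqrt_mul_self (Real.exp_pos _).le]
  have hval : Real.exp (-(2*r)) = (1-2*χ)/(1+2*N) := by
    rw [Real.exp_neg, hr, inv_div]
  -- Lyapunov
  have e1 : (c+s)*(1-2*χ) = 1+2*N := by
    rw [hce, hr]; field_simp
  have e2 : (c-s)*(1+2*N) = 1-2*χ := by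
    rw [hce', Real.exp_neg, hr, inv_div]; field_simp
  have hαβ2 : 0 ≤ (1+2*N+2*χ*s-c) + (2*χ*c-s) := by
    have h0 : (1+2*N+2*χ*s-c) + (2*χ*c-s) = 0 := by linear_combination (-1 : ℝ) * e1
    linarith
  have hαβ1 : 0 ≤ (1+2*N+2*χ*s-c) - (2*χ*c-s) := by
    have hcs2 : c - s = (1-2*χ)/(1+2*N) := by rw [hce', Real.exp_neg, hr, inv_div]
    have hrw : (1+2*χ)*((1-2*χ)/(1+2*N)) = ((1+2*χ)*(1-2*χ))/(1+2*N) := by ring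
    have key : (1+2*χ)*(c-s) ≤ 1+2*N := by
      rw [hcs2, hrw]; exact key_ineq N χ hN hχ0 h2N
    have expand : (1+2*N+2*χ*s-c) - (2*χ*c-s) = (1+2*N) - (1+2*χ)*(c-s) := by ring
    rw [expand]; linarith [key]
  have hLeq : ((-(1/2:ℝ)) • 1 + χ • (!![0,0,1,0; 0,0,0,-1; 1,0,0,0; 0,-1,0,0] :
        Matrix (Fin (2*2)) (Fin (2*2)) ℝ)) * σ
      + σ * ((-(1/2:ℝ)) • 1 + χ • (!![0,0,1,0; 0,0,0,-1; 1,0,0,0; 0,-1,0,0] :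
        Matrix (Fin (2*2)) (Fin (2*2)) ℝ))ᵀ + (1+2*N) • 1
      = !![1+2*N+2*χ*s-c, 0, 2*χ*c-s, 0; 0, 1+2*N+2*χ*s-c, 0, -(2*χ*c-s);
           2*χ*c-s, 0, 1+2*N+2*χ*s-c, 0; 0, -(2*χ*c-s), 0, 1+2*N+2*χ*s-c] := by
    have hAmat : (-(1/2:ℝ)) • 1 + χ • (!![0,0,1,0; 0,0,0,-1; 1,0,0,0; 0,-1,0,0] :
        Matrix (Fin (2*2)) (Fin (2*2)) ℝ)
        = !![-(1/2),0,χ,0; 0,-(1/2),0,-χ; χ,0,-(1/2),0; 0,-χ,0,-(1/2)] := by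
      ext i j
      fin_cases i <;> fin_cases j <;>
        simp [Matrix.add_apply, Matrix.smul_apply, Matrix.one_apply, Matrix.cons_val_zero, Matrix.cons_val_one, Matrix.head_cons, Matrix.cons_val_two, Matrix.cons_val_three, Matrix.vecHead, Matrix.vecTail] <;> try ring
    have hAT : (!![-(1/2),0,χ,0; 0,-(1/2),0,-χ; χ,0,-(1/2),0; 0,-χ,0,-(1/2)] :
        Matrix (Fin (2*2)) (Fin (2*2)) ℝ)ᵀ
        = !![-(1/2),0,χ,0; 0,-(1/2),0,-χ; χ,0,-(1/2),0; 0,-χ,0,-(1/2)] := by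
      ext i j
      fin_cases i <;> fin_cases j <;>
        simp [Matrix.transpose_apply, Matrix.cons_val_zero, Matrix.cons_val_one, Matrix.head_cons, Matrix.cons_val_two, Matrix.cons_val_three, Matrix.vecHead, Matrix.vecTail]
    rw [hAmat, hAT, hσ]
    ext i j
    fin_cases i <;> fin_cases j <;>
      simp [Matrix.mul_apply, Matrix.add_apply, Matrix.smul_apply, Matrix.one_apply,
        Fin.sum_univ_four, Matrix.cons_val_zero, Matrix.cons_val_one, Matrix.head_cons, Matrix.cons_val_two, Matrix.cons_val_three, Matrix.vecHead, Matrix.vecTail] <;> try ring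
  -- determinant
  have hdet : σ.det = 1 := by
    rw [hσ]
    have h2 : (c^2 - s^2)^2 = 1 := by rw [hpy]; norm_num
    exact (detSig c s).trans h2
  -- symmetry
  have hsymm : σ.IsSymm := by
    have : σᵀ = σ := by
      rw [hσ]
      ext i j
      fin_cases i <;> fin_cases j <;> simp [Matrix.transpose_apply, Matrix.cons_val_zero, Matrix.cons_val_one, Matrix.head_cons, Matrix.cons_val_two, Matrix.cons_val_three, Matrix.vecHead, Matrix.vecTail]
    exact this
  -- complex PSD
  have mm2 : ∀ (X Y : Matrix (Fin (2*2)) (Fin (2*2)) ℝ),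
      (X*Y).map (Complex.ofReal ·) = X.map (Complex.ofReal ·) * Y.map (Complex.ofReal ·) :=
    fun X Y => Matrix.map_mul (f := Complex.ofRealHom)
  have hSOS : S * !![0,1,0,0; -1,0,0,0; 0,0,0,1; 0,0,-1,0] * S
      = !![0,1,0,0; -1,0,0,0; 0,0,0,1; 0,0,-1,0] := by
    have h1 : S * !![0,1,0,0; -1,0,0,0; 0,0,0,1; 0,0,-1,0] * S
        = !![0, c1^2-s1^2, 0, 0; -(c1^2-s1^2), 0, 0, 0;
             0, 0, 0, c1^2-s1^2; 0, 0, -(c1^2-s1^2), 0] := by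
      rw [hS]
      ext i j
      fin_cases i <;> fin_cases j <;>
        simp [Matrix.mul_apply, Fin.sum_univ_four, Matrix.cons_val_zero, Matrix.cons_val_one, Matrix.head_cons, Matrix.cons_val_two, Matrix.cons_val_three, Matrix.vecHead, Matrix.vecTail] <;> try ring
    rw [h1, hpy1]
  have hSmapH : (S.map (Complex.ofReal ·))ᴴ = S.map (Complex.ofReal ·) := by
    rw [hS]
    ext i j
    fin_cases i <;> fin_cases j <;>
      simp [Matrix.conjTranspose_apply, Matrix.map_apply, Complex.conj_ofReal, Matrix.cons_val_zero, Matrix.cons_val_one, Matrix.head_cons, Matrix.cons_val_two, Matrix.cons_val_three, Matrix.vecHead, Matrix.vecTail]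
  have hPpsd : ((1 : Matrix (Fin (2*2)) (Fin (2*2)) ℂ) + Complex.I •
      (!![0,1,0,0; -1,0,0,0; 0,0,0,1; 0,0,-1,0] :
        Matrix (Fin (2*2)) (Fin (2*2)) ℝ).map (Complex.ofReal ·)).PosSemidef := by
    refine Matrix.PosSemidef.of_dotProduct_mulVec_nonneg ?_ ?_
    · ext i j
      fin_cases i <;> fin_cases j <;>
        simp [Matrix.conjTranspose_apply, Matrix.add_apply, Matrix.smul_apply,
          Matrix.map_apply, Matrix.one_apply, Matrix.cons_val_zero, Matrix.cons_val_one, Matrix.head_cons, Matrix.cons_val_two, Matrix.cons_val_three, Matrix.vecHead, Matrix.vecTail, Complex.ext_iff]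
    · intro x
      have e : star x ⬝ᵥ (((1 : Matrix (Fin (2*2)) (Fin (2*2)) ℂ) + Complex.I •
          (!![0,1,0,0; -1,0,0,0; 0,0,0,1; 0,0,-1,0] :
            Matrix (Fin (2*2)) (Fin (2*2)) ℝ).map (Complex.ofReal ·)) *ᵥ x)
          = star (x 0 + Complex.I * x 1) * (x 0 + Complex.I * x 1)
            + star (x 2 + Complex.I * x 3) * (x 2 + Complex.I * x 3) := by
        simp [dotProduct, Matrix.mulVec, Fin.sum_univ_four, Pi.star_apply,
          Matrix.one_apply, Matrix.map_apply, Matrix.smul_apply, Matrix.add_apply,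
          Complex.star_def, map_add, _root_.map_mul, Complex.conj_I, Matrix.cons_val_zero, Matrix.cons_val_one, Matrix.head_cons, Matrix.cons_val_two, Matrix.cons_val_three, Matrix.vecHead, Matrix.vecTail]
        ring_nf
        simp [Complex.I_sq]
        ring
      rw [e]
      exact add_nonneg (star_mul_self_nonneg _) (star_mul_self_nonneg _)
  have hsand : (S.map (Complex.ofReal ·))ᴴ * ((1 : Matrix (Fin (2*2)) (Fin (2*2)) ℂ)
        + Complex.I • (!![0,1,0,0; -1,0,0,0; 0,0,0,1; 0,0,-1,0] :
          Matrix (Fin (2*2)) (Fin (2*2)) ℝ).map (Complex.ofReal ·))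
        * (S.map (Complex.ofReal ·))
      = σ.map (Complex.ofReal ·) + Complex.I • (Omega 2).map (Complex.ofReal ·) := by
    rw [omega_eq, hSmapH, Matrix.mul_add, Matrix.mul_one, Matrix.add_mul,
      Matrix.mul_smul, Matrix.smul_mul, ← mm2 S S, hS2, ← mm2, ← mm2, hSOS]
  have hpsd2 : (σ.map (Complex.ofReal ·)
      + Complex.I • (Omega 2).map (Complex.ofReal ·)).PosSemidef := by
    rw [← hsand]
    exact hPpsd.conjTranspose_mul_mul_same _
  refine ⟨⟨hsymm, hpsd2⟩, hdet, ?_, hnumin, ?_, ?_⟩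
  · rw [hLeq]
    exact psd_struct _ _ hαβ1 hαβ2
  · rw [hnumin, hval]
  · rw [logNeg, hnumin, hval, Real.logb_div (ne_of_gt h2χ) (ne_of_gt h2N), max_eq_right]
    · ring
    · have h1 : Real.logb 2 (1-2*χ) ≤ Real.logb 2 (1+2*N) :=
        Real.logb_le_logb_of_le (by norm_num : (1:ℝ) < 2) h2χ (by linarith)
      linarith
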